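/- With H̃^(q) the σ-row-permuted Sylvester Hadamard matrix of order q = 2^m, for every nonzero i ∈ F_2^m and every pair j₁, j₂ ∈ F_2^m with j₁ + j₂ = i (XOR), one has H̃^(q)_{i,j₁} = −H̃^(q)_{i,j₂}. -/
import Mathlib


/-- `σ` as in the construction. -/
def sigmaPerm {m : ℕ} (ω : Fin m → ZMod 2) : Fin m → ZMod 2 :=
  if h : ω = 0 then 0
  else
    let k := (Finset.univ.filter fun s => ω s ≠ 0).max' (by
      obtain ⟨s, hs⟩ : ∃ s, ω s ≠ 0 := by
        by_contra hc; push_neg at hc; exact h (funext fun s => hc s)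
      exact ⟨s, Finset.mem_filter.mpr ⟨Finset.mem_univ s, hs⟩⟩)
    fun s => if s < k then 1 - ω s else if s = k then 1 else 0

/-- The Sylvester Hadamard matrix of order `2^m`, `H_{ω,ν} = (−1)^{⟨ω,ν⟩}`. -/
def sylvester {m : ℕ} (ω ν : Fin m → ZMod 2) : ℝ :=
  (-1 : ℝ) ^ (∑ s, ω s * ν s : ZMod 2).val

/-- The row-permuted Sylvester Hadamard matrix `H̃_{ω,ν} = H_{σ(ω),ν}`. -/
def sylvesterPerm {m : ℕ} (ω ν : Fin m → ZMod 2) : ℝ :=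
  sylvester (sigmaPerm ω) ν

lemma sigmaPerm_inner_self {m : ℕ} (i : Fin m → ZMod 2) (hi : i ≠ 0) :
    (∑ s, sigmaPerm i s * i s) = 1 := by
  unfold sigmaPerm
  rw [dif_neg hi]
  set k := (Finset.univ.filter fun s => i s ≠ 0).max' _ with hk
  have hik : i k ≠ 0 := by
    have := Finset.max'_mem (Finset.univ.filter fun s => i s ≠ 0)
      (by
        obtain ⟨s, hs⟩ : ∃ s, i s ≠ 0 := by
          by_contra hc; push_neg at hc; exact hi (funext fun s => hc s)
        exact ⟨s, Finset.mem_filter.mpr ⟨Finset.mem_univ s, hs⟩⟩)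
    exact (Finset.mem_filter.mp this).2
  have hik1 : i k = 1 := by
    have : ∀ x : ZMod 2, x ≠ 0 → x = 1 := by decide
    exact this _ hik
  have hpt : ∀ s, (if s < k then 1 - i s else if s = k then 1 else 0) * i s
      = if s = k then 1 else 0 := by
    intro s
    by_cases h2 : s = k
    · subst h2; simp [hik1]
    · rw [if_neg h2]
      have h3 : ∀ x : ZMod 2, (1 - x) * x = 0 := by decide
      split_ifs with h1
      · exact h3 _
      · exact zero_mul _
  calc (∑ s, (if s < k then 1 - i s else if s = k then 1 else 0) * i s)
      = ∑ s, if s = k then (1 : ZMod 2) else 0 := Finset.sum_congr rfl fun s _ => hpt s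
    _ = 1 := by simp

lemma sylvester_neg {m : ℕ} (a b c : Fin m → ZMod 2)
    (hbc : (∑ s, a s * b s) = (∑ s, a s * c s) + 1) :
    sylvester a b = - sylvester a c := by
  unfold sylvester
  rw [hbc]
  have hx : (∑ s, a s * c s) = 0 ∨ (∑ s, a s * c s) = 1 := by
    generalize (∑ s, a s * c s : ZMod 2) = x
    revert x; decide
  rcases hx with hx | hx <;> rw [hx]
  · norm_num [ZMod.val_one]
  · rw [show ((1 : ZMod 2) + 1) = 0 from rfl]
    norm_num [ZMod.val_one]

theorem sylvesterPerm_antisymmetric (m : ℕ) (i : Fin m → ZMod 2) (hi : i ≠ 0)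
    (j₁ j₂ : Fin m → ZMod 2) (h : j₁ + j₂ = i) :
    sylvesterPerm i j₁ = - sylvesterPerm i j₂ := by
  have hj : j₁ = j₂ + i := by
    funext s
    have := congrFun h s
    have h2 : ∀ x y z : ZMod 2, x + y = z → x = y + z := by decide
    exact h2 _ _ _ this
  apply sylvester_neg
  rw [hj]
  have : (∑ s, sigmaPerm i s * (j₂ s + i s))
      = (∑ s, sigmaPerm i s * j₂ s) + ∑ s, sigmaPerm i s * i s := by
    rw [← Finset.sum_add_distrib]
    exact Finset.sum_congr rfl fun s _ => mul_add _ _ _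
  simp only [Pi.add_apply]
  rw [this, sigmaPerm_inner_self i hi]
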